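/- Let k, m ∈ ℝ with k ≠ 0, let a : ℝ → ℝ be differentiable, nonnegative, and nondecreasing, and let χ : ℝ → ℂ be twice differentiable with χ''(η) + (k² + m²·a(η)²)·χ(η) = 0 for all η ∈ ℝ. Then the function η ↦ Q(η)/(k² + m²·a(η)²), where Q(η) := |χ'(η)|² + (k² + m²·a(η)²)·|χ(η)|², is nonincreasing; indeed its derivative equals −2·m²·a(η)·a'(η)·|χ'(η)|²/(k² + m²·a(η)²)². -/

import Mathlib

/-- For a mode `χ` solving `χ'' + (k² + m²a²)χ = 0` with `k ≠ 0` and `a` nonnegative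
and nondecreasing, the quantity `Q/(k² + m²a²)` is nonincreasing, with derivative
`-2 m² a a' |χ'|²/(k² + m²a²)²`. -/
theorem stmt_4 (k m : ℝ) (hk : k ≠ 0) (a : ℝ → ℝ) (χ : ℝ → ℂ)
    (ha : Differentiable ℝ a) (hapos : ∀ t, 0 ≤ a t) (hamono : Monotone a)
    (hχ : Differentiable ℝ χ) (hχ' : Differentiable ℝ (deriv χ))
    (heq : ∀ η : ℝ, deriv (deriv χ) η = -((k ^ 2 + m ^ 2 * a η ^ 2 : ℝ) : ℂ) * χ η) :
    let Q : ℝ → ℝ := fun η =>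
      ‖deriv χ η‖ ^ 2 + (k ^ 2 + m ^ 2 * a η ^ 2) * ‖χ η‖ ^ 2
    let R : ℝ → ℝ := fun η => Q η / (k ^ 2 + m ^ 2 * a η ^ 2)
    Antitone R ∧
    (∀ η : ℝ, HasDerivAt R
      (-(2 * m ^ 2 * a η * deriv a η * ‖deriv χ η‖ ^ 2) /
        (k ^ 2 + m ^ 2 * a η ^ 2) ^ 2) η) := by
  intro Q R
  have hω2pos : ∀ η, (0:ℝ) < k ^ 2 + m ^ 2 * a η ^ 2 := by
    intro η
    have : (0:ℝ) < k ^ 2 := by positivity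
    nlinarith [sq_nonneg (m * a η)]
  -- derivative of the frequency squared
  have hω2 : ∀ η, HasDerivAt (fun t => k ^ 2 + m ^ 2 * a t ^ 2)
      (2 * m ^ 2 * a η * deriv a η) η := by
    intro η
    have h := (((ha η).hasDerivAt.pow 2).const_mul (m ^ 2)).const_add (k ^ 2)
    refine h.congr_deriv ?_
    ring
  -- real and imaginary parts
  have hx : ∀ η, HasDerivAt (fun t => (χ t).re) ((deriv χ η).re) η := fun η =>
    Complex.reCLM.hasFDerivAt.comp_hasDerivAt η (hχ η).hasDerivAt
  have hy : ∀ η, HasDerivAt (fun t => (χ t).im) ((deriv χ η).im) η := fun η =>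
    Complex.imCLM.hasFDerivAt.comp_hasDerivAt η (hχ η).hasDerivAt
  have hp : ∀ η, HasDerivAt (fun t => (deriv χ t).re)
      (-(k ^ 2 + m ^ 2 * a η ^ 2) * (χ η).re) η := by
    intro η
    have h := Complex.reCLM.hasFDerivAt.comp_hasDerivAt η (hχ' η).hasDerivAt
    have hre : (deriv (deriv χ) η).re = -(k ^ 2 + m ^ 2 * a η ^ 2) * (χ η).re := by
      rw [heq η]; simp [Complex.mul_re, ← Complex.ofReal_pow]
    simpa [hre, Function.comp_def] using h
  have hq : ∀ η, HasDerivAt (fun t => (deriv χ t).im)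
      (-(k ^ 2 + m ^ 2 * a η ^ 2) * (χ η).im) η := by
    intro η
    have h := Complex.imCLM.hasFDerivAt.comp_hasDerivAt η (hχ' η).hasDerivAt
    have him : (deriv (deriv χ) η).im = -(k ^ 2 + m ^ 2 * a η ^ 2) * (χ η).im := by
      rw [heq η]; simp [Complex.mul_im, ← Complex.ofReal_pow]
    simpa [him, Function.comp_def] using h
  -- Q rewritten in terms of real/imaginary parts
  have hQeq : Q = fun η => ((deriv χ η).re ^ 2 + (deriv χ η).im ^ 2) +
      (k ^ 2 + m ^ 2 * a η ^ 2) * ((χ η).re ^ 2 + (χ η).im ^ 2) := by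
    funext η
    simp only [Q, Complex.sq_norm, Complex.normSq_apply]
    ring
  have hQd : ∀ η, HasDerivAt Q
      (2 * m ^ 2 * a η * deriv a η * ((χ η).re ^ 2 + (χ η).im ^ 2)) η := by
    intro η
    rw [hQeq]
    have h : HasDerivAt (fun η => ((deriv χ η).re ^ 2 + (deriv χ η).im ^ 2) +
        (k ^ 2 + m ^ 2 * a η ^ 2) * ((χ η).re ^ 2 + (χ η).im ^ 2))
        ((2 * (deriv χ η).re ^ 1 * (-(k ^ 2 + m ^ 2 * a η ^ 2) * (χ η).re) +
          2 * (deriv χ η).im ^ 1 * (-(k ^ 2 + m ^ 2 * a η ^ 2) * (χ η).im)) +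
         ((2 * m ^ 2 * a η * deriv a η) * ((χ η).re ^ 2 + (χ η).im ^ 2) +
          (k ^ 2 + m ^ 2 * a η ^ 2) *
            (2 * (χ η).re ^ 1 * (deriv χ η).re + 2 * (χ η).im ^ 1 * (deriv χ η).im))) η :=
      (((hp η).pow 2).add ((hq η).pow 2)).add
        ((hω2 η).mul (((hx η).pow 2).add ((hy η).pow 2)))
    convert h using 1
    ring
  have key : ∀ η : ℝ, HasDerivAt R
      (-(2 * m ^ 2 * a η * deriv a η * ‖deriv χ η‖ ^ 2) /
        (k ^ 2 + m ^ 2 * a η ^ 2) ^ 2) η := by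
    intro η
    have h := (hQd η).div (hω2 η) (ne_of_gt (hω2pos η))
    have habs : ‖deriv χ η‖ ^ 2 = (deriv χ η).re ^ 2 + (deriv χ η).im ^ 2 := by
      rw [Complex.sq_norm, Complex.normSq_apply]; ring
    have hQval : Q η = ((deriv χ η).re ^ 2 + (deriv χ η).im ^ 2) +
        (k ^ 2 + m ^ 2 * a η ^ 2) * ((χ η).re ^ 2 + (χ η).im ^ 2) := by rw [hQeq]
    refine h.congr_deriv ?_
    rw [habs, hQval]
    field_simp
    ring
  refine ⟨?_, key⟩
  have hderiva : ∀ η, 0 ≤ deriv a η := by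
    intro η
    have h := (ha η).hasDerivAt
    rw [hasDerivAt_iff_tendsto_slope] at h
    have h2 : Filter.Tendsto (slope a η) (nhdsWithin η (Set.Ioi η)) (nhds (deriv a η)) :=
      h.mono_left (nhdsWithin_mono η (fun x hx => ne_of_gt hx))
    refine ge_of_tendsto h2 ?_
    filter_upwards [self_mem_nhdsWithin] with x hx
    have hx' : η < x := hx
    rw [slope_def_field]
    exact div_nonneg (sub_nonneg.2 (hamono hx'.le)) (sub_nonneg.2 hx'.le)
  refine antitone_of_deriv_nonpos (fun η => (key η).differentiableAt) (fun η => ?_)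
  rw [(key η).deriv]
  apply div_nonpos_of_nonpos_of_nonneg
  · have : 0 ≤ 2 * m ^ 2 * a η * deriv a η * ‖deriv χ η‖ ^ 2 := by
      have := hapos η; have := hderiva η; positivity
    linarith
  · positivity
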